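/- Let (H, Q) be a real symplectic vector space of dimension 2n, S an isotropic subspace of H of dimension m, and η(S) the space of infinitesimally symplectic endomorphisms N of H with range N ⊆ S. Then the linear map sending N ∈ η(S) to the symmetric bilinear form on H/S^⊥ induced by φ_N(v, w) = Q(v, Nw) is a linear isomorphism from η(S) onto the space of all symmetric bilinear forms on H/S^⊥; in particular, dim η(S) = m(m+1)/2, so η(S) is linearly isomorphic to the space Sym(m, ℝ) of symmetric m × m real matrices. -/

import Mathlib

/-- The `Q`-orthogonal complement of a subspace `S`:
`S^⊥ = {w : Q(s, w) = 0 for all s ∈ S}`. -/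
def perp {H : Type*} [AddCommGroup H] [Module ℝ H]
    (Q : H →ₗ[ℝ] H →ₗ[ℝ] ℝ) (S : Submodule ℝ H) : Submodule ℝ H where
  carrier := {w | ∀ s ∈ S, Q s w = 0}
  add_mem' := by
    intro a b ha hb s hs
    simp [map_add, ha s hs, hb s hs]
  zero_mem' := by
    intro s hs
    simp
  smul_mem' := by
    intro c a ha s hs
    simp [map_smul, ha s hs]

/-- The space `η(S)` of infinitesimally symplectic endomorphisms of `H`
whose range is contained in `S`, as a linear subspace of `End(H)`. -/
def etaSub {H : Type*} [AddCommGroup H] [Module ℝ H]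
    (Q : H →ₗ[ℝ] H →ₗ[ℝ] ℝ) (S : Submodule ℝ H) : Submodule ℝ (H →ₗ[ℝ] H) where
  carrier := {N | (∀ v w, Q (N v) w + Q v (N w) = 0) ∧ ∀ v, N v ∈ S}
  add_mem' := by
    rintro N N' ⟨h1, h2⟩ ⟨h1', h2'⟩
    refine ⟨fun v w => ?_, fun v => ?_⟩
    · simp only [LinearMap.add_apply, map_add]
      linarith [h1 v w, h1' v w]
    · exact S.add_mem (h2 v) (h2' v)
  zero_mem' := by
    refine ⟨fun v w => ?_, fun v => ?_⟩
    · simp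
    · simp [Submodule.zero_mem]
  smul_mem' := by
    rintro c N ⟨h1, h2⟩
    refine ⟨fun v w => ?_, fun v => ?_⟩
    · simp only [LinearMap.smul_apply, map_smul, smul_eq_mul]
      linear_combination c * h1 v w
    · exact S.smul_mem c (h2 v)

/-- The space of symmetric bilinear forms on a real vector space `V`. -/
noncomputable def symBilinForms (V : Type*) [AddCommGroup V] [Module ℝ V] :
    Submodule ℝ (V →ₗ[ℝ] V →ₗ[ℝ] ℝ) where
  carrier := {B | ∀ v w, B v w = B w v}
  add_mem' := by
    intro B C hB hC v w
    simp [hB v w, hC v w]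
  zero_mem' := by
    intro v w
    simp
  smul_mem' := by
    intro c B hB v w
    simp [hB v w]

/-- The space `Sym(m, ℝ)` of symmetric `m × m` real matrices. -/
def symMat (m : ℕ) : Submodule ℝ (Matrix (Fin m) (Fin m) ℝ) where
  carrier := {A | A.IsSymm}
  add_mem' := by
    intro A B hA hB
    simp only [Set.mem_setOf_eq, Matrix.IsSymm] at *
    rw [Matrix.transpose_add, hA, hB]
  zero_mem' := by
    simp only [Set.mem_setOf_eq, Matrix.IsSymm, Matrix.transpose_zero]
  smul_mem' := by
    intro c A hA
    simp only [Set.mem_setOf_eq, Matrix.IsSymm] at *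
    rw [Matrix.transpose_smul, hA]

/- ----------------  auxiliary material  ---------------- -/

section descend
variable {H : Type*} [AddCommGroup H] [Module ℝ H]
  (Q : H →ₗ[ℝ] H →ₗ[ℝ] ℝ) (S : Submodule ℝ H)

/-- descend `φ_N(v,w) = Q v (N w)` to the quotient `H ⧸ perp Q S`. -/
noncomputable def descend (N : H →ₗ[ℝ] H)
    (h1 : ∀ v ∈ perp Q S, ∀ w, Q v (N w) = 0)
    (h2 : ∀ w ∈ perp Q S, ∀ v, Q v (N w) = 0) :
    (H ⧸ perp Q S) →ₗ[ℝ] (H ⧸ perp Q S) →ₗ[ℝ] ℝ :=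
  LinearMap.flip <| (perp Q S).liftQ
    (((perp Q S).liftQ (Q.compl₂ N)
      (fun v hv => LinearMap.ext fun w => h1 v hv w)).flip)
    (fun w hw => LinearMap.ext fun x => by
      obtain ⟨v, rfl⟩ := Submodule.Quotient.mk_surjective _ x
      exact h2 w hw v)

@[simp] theorem descend_mk (N : H →ₗ[ℝ] H) (h1 h2) (v w : H) :
    descend Q S N h1 h2 (Submodule.Quotient.mk v) (Submodule.Quotient.mk w) = Q v (N w) := rfl

theorem bilin_qext {B C : (H ⧸ perp Q S) →ₗ[ℝ] (H ⧸ perp Q S) →ₗ[ℝ] ℝ}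
    (h : ∀ v w : H, B (Submodule.Quotient.mk v) (Submodule.Quotient.mk w)
      = C (Submodule.Quotient.mk v) (Submodule.Quotient.mk w)) : B = C := by
  refine LinearMap.ext fun x => ?_
  obtain ⟨v, rfl⟩ := Submodule.Quotient.mk_surjective _ x
  refine LinearMap.ext fun y => ?_
  obtain ⟨w, rfl⟩ := Submodule.Quotient.mk_surjective _ y
  exact h v w

end descend

/-- symmetric matrices ≃ functions on Sym2 -/
noncomputable def symMatEquivSym2 (m : ℕ) :
    symMat m ≃ₗ[ℝ] (Sym2 (Fin m) → ℝ) where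
  toFun A := Sym2.lift ⟨fun i j => A.val i j, fun i j => (A.2 : Matrix.IsSymm _).apply j i⟩
  invFun f := ⟨Matrix.of (fun i j => f s(i, j)), Matrix.IsSymm.ext fun i j => by
    simp [Sym2.eq_swap]⟩
  left_inv A := by
    apply Subtype.ext
    ext i j
    simp
  right_inv f := by
    funext p
    induction p with
    | _ i j => simp
  map_add' A B := by
    funext p
    induction p with
    | _ i j => simp
  map_smul' c A := by
    funext p
    induction p with
    | _ i j => simp

theorem finrank_symMat (m : ℕ) : Module.finrank ℝ (symMat m) = m * (m + 1) / 2 := by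
  rw [(symMatEquivSym2 m).finrank_eq, Module.finrank_fintype_fun_eq_card, Sym2.card]
  simp [Nat.choose_two_right, Nat.mul_comm]

/-- symmetric bilinear forms on an `m`-dimensional space ≃ symmetric matrices -/
noncomputable def symBilinEquivSymMat (V : Type*) [AddCommGroup V] [Module ℝ V]
    [FiniteDimensional ℝ V] (m : ℕ) (hV : Module.finrank ℝ V = m) :
    symBilinForms V ≃ₗ[ℝ] symMat m := by
  classical
  let b : Module.Basis (Fin m) ℝ V := Module.finBasisOfFinrankEq ℝ V hV
  let M : (V →ₗ[ℝ] V →ₗ[ℝ] ℝ) ≃ₗ[ℝ] Matrix (Fin m) (Fin m) ℝ := LinearMap.toMatrix₂ b b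
  have hMsym : ∀ B : V →ₗ[ℝ] V →ₗ[ℝ] ℝ, B ∈ symBilinForms V → (M B).IsSymm := by
    intro B hB
    refine Matrix.IsSymm.ext fun i j => ?_
    simp only [M, LinearMap.toMatrix₂_apply]
    exact hB (b j) (b i)
  have hMsym' : ∀ A : Matrix (Fin m) (Fin m) ℝ, A.IsSymm → M.symm A ∈ symBilinForms V := by
    intro A hA
    have hflip : (M.symm A).flip = M.symm A := by
      apply M.injective
      apply Matrix.ext
      intro i j
      have h1 : M ((M.symm A).flip) i j = (M.symm A) (b j) (b i) := by
        simp only [M, LinearMap.toMatrix₂_apply, LinearMap.flip_apply]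
      have h2 : M (M.symm A) j i = (M.symm A) (b j) (b i) := by
        simp only [M, LinearMap.toMatrix₂_apply]
      rw [h1, ← h2, M.apply_symm_apply, hA.apply]
    intro v w
    conv_lhs => rw [← hflip]
    rfl
  exact
    { toFun := fun B => ⟨M B.val, hMsym B.val B.2⟩
      invFun := fun A => ⟨M.symm A.val, hMsym' A.val A.2⟩
      left_inv := fun B => Subtype.ext (M.symm_apply_apply B.val)
      right_inv := fun A => Subtype.ext (M.apply_symm_apply A.val)
      map_add' := fun B C => Subtype.ext (M.map_add B.val C.val)
      map_smul' := fun c B => Subtype.ext (M.map_smul c B.val) }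

/- ----------------  main theorem  ---------------- -/

set_option maxHeartbeats 1000000 in
/-- Let `(H, Q)` be a real symplectic vector space of dimension `2n`,
`S` an isotropic subspace of dimension `m`, and `η(S)` the space of infinitesimally
symplectic endomorphisms with range contained in `S`. Then `N ↦` (the symmetric bilinear
form on `H/S^⊥` induced by `φ_N(v,w) = Q(v, N w)`) is a linear isomorphism of `η(S)` onto
the space of all symmetric bilinear forms on `H/S^⊥`; in particular
`dim η(S) = m(m+1)/2` and `η(S)` is linearly isomorphic to `Sym(m, ℝ)`. -/
theorem stmt_9 {H : Type*} [AddCommGroup H] [Module ℝ H] [FiniteDimensional ℝ H]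
    (n m : ℕ) (hdim : Module.finrank ℝ H = 2 * n)
    (Q : H →ₗ[ℝ] H →ₗ[ℝ] ℝ)
    (halt : ∀ v, Q v v = 0)
    (hnondeg : ∀ v, (∀ w, Q v w = 0) → v = 0)
    (S : Submodule ℝ H)
    (hiso : ∀ s ∈ S, ∀ s' ∈ S, Q s s' = 0)
    (hm : Module.finrank ℝ S = m) :
    (∃ e : (etaSub Q S) ≃ₗ[ℝ] (symBilinForms (H ⧸ perp Q S)),
      ∀ (N : etaSub Q S) (v w : H),
        (e N).val (Submodule.Quotient.mk v) (Submodule.Quotient.mk w)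
          = Q v ((N : H →ₗ[ℝ] H) w)) ∧
    Module.finrank ℝ (etaSub Q S) = m * (m + 1) / 2 ∧
    Nonempty ((etaSub Q S) ≃ₗ[ℝ] (symMat m)) := by
  classical
  -- skew-symmetry
  have hskew : ∀ v w, Q v w = -Q w v := by
    intro v w
    have h := halt (v + w)
    simp only [map_add, LinearMap.add_apply, halt v, halt w] at h
    linarith
  -- injectivity of Q.flip
  have hflip_inj : Function.Injective (Q.flip : H →ₗ[ℝ] Module.Dual ℝ H) := by
    rw [← LinearMap.ker_eq_bot, Submodule.eq_bot_iff]
    intro v hv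
    apply hnondeg
    intro w
    have : Q.flip v w = 0 := by rw [hv]; rfl
    rw [LinearMap.flip_apply] at this
    rw [hskew v w, this, neg_zero]
  -- surjectivity of Q.flip
  have hflip_surj : Function.Surjective (Q.flip : H →ₗ[ℝ] Module.Dual ℝ H) := by
    rw [← LinearMap.range_eq_top]
    apply Submodule.eq_top_of_finrank_eq
    rw [LinearMap.finrank_range_of_inj hflip_inj, Subspace.dual_finrank_eq]
  -- dimension of perp of any subspace
  have hperp_dim : ∀ T : Submodule ℝ H,
      Module.finrank ℝ (perp Q T) + Module.finrank ℝ T = Module.finrank ℝ H := by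
    intro T
    set ρ : H →ₗ[ℝ] Module.Dual ℝ T := (T.subtype.dualMap).comp Q.flip with hρ
    have hker : LinearMap.ker ρ = perp Q T := by
      ext w
      constructor
      · intro hw s hs
        have : ρ w ⟨s, hs⟩ = 0 := by rw [LinearMap.mem_ker.mp hw]; rfl
        simpa [hρ] using this
      · intro hw
        refine LinearMap.mem_ker.mpr (LinearMap.ext fun s => ?_)
        simpa [hρ] using hw s s.2
    have hsurj : Function.Surjective ρ :=
      (LinearMap.dualMap_surjective_of_injective T.injective_subtype).comp hflip_surj
    have h2 := LinearMap.finrank_range_add_finrank_ker ρ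
    rw [hker, LinearMap.range_eq_top.mpr hsurj, finrank_top, Subspace.dual_finrank_eq] at h2
    omega
  -- dimension of the quotient
  have hVm : Module.finrank ℝ (H ⧸ perp Q S) = m := by
    have h1 := Submodule.finrank_quotient_add_finrank (perp Q S)
    have h2 := hperp_dim S
    omega
  -- bidual: perp (perp S) = S
  have hbidual : perp Q (perp Q S) = S := by
    have hle : S ≤ perp Q (perp Q S) := by
      intro s hs v hv
      rw [hskew v s, hv s hs, neg_zero]
    have h1 := hperp_dim S
    have h2 := hperp_dim (perp Q S)
    refine (Submodule.eq_of_le_of_finrank_le hle ?_).symm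
    omega
  -- well-definedness of descent for N ∈ etaSub
  have hd1 : ∀ N : etaSub Q S, ∀ v ∈ perp Q S, ∀ w, Q v ((N : H →ₗ[ℝ] H) w) = 0 := by
    intro N v hv w
    rw [hskew]
    rw [hv _ (N.2.2 w), neg_zero]
  have hd2 : ∀ N : etaSub Q S, ∀ w ∈ perp Q S, ∀ v, Q v ((N : H →ₗ[ℝ] H) w) = 0 := by
    intro N w hw v
    have h := N.2.1 v w
    have h2 : Q ((N : H →ₗ[ℝ] H) v) w = 0 := hw _ (N.2.2 v)
    linarith
  -- the forward linear map
  set Φfun : etaSub Q S → (symBilinForms (H ⧸ perp Q S)) := fun N =>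
    ⟨descend Q S (N : H →ₗ[ℝ] H) (hd1 N) (hd2 N), by
      intro x y
      obtain ⟨v, rfl⟩ := Submodule.Quotient.mk_surjective _ x
      obtain ⟨w, rfl⟩ := Submodule.Quotient.mk_surjective _ y
      rw [descend_mk, descend_mk]
      have h := N.2.1 w v
      rw [hskew v ((N : H →ₗ[ℝ] H) w)]
      linarith⟩ with hΦfun
  have hΦmk : ∀ (N : etaSub Q S) (v w : H),
      (Φfun N).val (Submodule.Quotient.mk v) (Submodule.Quotient.mk w)
        = Q v ((N : H →ₗ[ℝ] H) w) := fun N v w => rfl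
  set Φ : etaSub Q S →ₗ[ℝ] (symBilinForms (H ⧸ perp Q S)) :=
    { toFun := Φfun
      map_add' := by
        intro N N'
        apply Subtype.ext
        apply bilin_qext
        intro v w
        simp [hΦmk]
      map_smul' := by
        intro c N
        apply Subtype.ext
        apply bilin_qext
        intro v w
        simp [hΦmk] } with hΦ
  -- injectivity
  have hΦinj : Function.Injective Φ := by
    intro N₁ N₂ hNe
    apply Subtype.ext
    refine LinearMap.ext fun w => ?_
    have hvw : ∀ v, Q v ((N₁ : H →ₗ[ℝ] H) w) = Q v ((N₂ : H →ₗ[ℝ] H) w) := by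
      intro v
      rw [← hΦmk N₁ v w, ← hΦmk N₂ v w]
      have h0 : Φfun N₁ = Φfun N₂ := hNe
      rw [h0]
    have hz : (N₁ : H →ₗ[ℝ] H) w - (N₂ : H →ₗ[ℝ] H) w = 0 := by
      apply hnondeg
      intro v
      have h1 := hvw v
      have h2 := hskew ((N₁ : H →ₗ[ℝ] H) w - (N₂ : H →ₗ[ℝ] H) w) v
      rw [h2, map_sub]
      linarith
    exact sub_eq_zero.mp hz
  -- surjectivity
  have hΦsurj : Function.Surjective Φ := by
    rintro ⟨B, hB⟩
    set π : H →ₗ[ℝ] (H ⧸ perp Q S) := (perp Q S).mkQ with hπ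
    set Qf : H ≃ₗ[ℝ] Module.Dual ℝ H :=
      LinearEquiv.ofBijective Q.flip ⟨hflip_inj, hflip_surj⟩ with hQf
    set N : H →ₗ[ℝ] H := (Qf.symm : Module.Dual ℝ H →ₗ[ℝ] H).comp (B.compl₁₂ π π).flip with hN
    have hNval : ∀ v w, Q v (N w) = B (Submodule.Quotient.mk v) (Submodule.Quotient.mk w) := by
      intro v w
      have h : Q.flip (N w) = (B.compl₁₂ π π).flip w := by
        exact Qf.apply_symm_apply ((B.compl₁₂ π π).flip w)
      have h2 := congrArg (fun f => f v) h
      simpa [hπ] using h2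
    have hNmem : N ∈ etaSub Q S := by
      constructor
      · intro v w
        rw [hNval v w, hskew (N v) w, hNval w v, hB]
        ring
      · intro w
        rw [← hbidual]
        intro v hv
        rw [hNval v w]
        have : (Submodule.Quotient.mk v : H ⧸ perp Q S) = 0 :=
          (Submodule.Quotient.mk_eq_zero _).mpr hv
        rw [this]
        simp
    refine ⟨⟨N, hNmem⟩, ?_⟩
    apply Subtype.ext
    apply bilin_qext
    intro v w
    show (Φfun _).val _ _ = _
    rw [hΦmk]
    exact hNval v w
  set e : (etaSub Q S) ≃ₗ[ℝ] (symBilinForms (H ⧸ perp Q S)) :=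
    LinearEquiv.ofBijective Φ ⟨hΦinj, hΦsurj⟩ with he
  have hV : FiniteDimensional ℝ (H ⧸ perp Q S) := inferInstance
  refine ⟨⟨e, fun N v w => hΦmk N v w⟩, ?_, ?_⟩
  · have h1 := LinearEquiv.finrank_eq (R := ℝ) (e.trans (symBilinEquivSymMat (H ⧸ perp Q S) m hVm))
    rw [h1, finrank_symMat]
  · exact ⟨e.trans (symBilinEquivSymMat _ m hVm)⟩
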